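/- If f₁, …, f_k : X → X' are continuous maps and g₁, …, g_k : X' → Y are continuous maps with g_i homotopic to g_{i+1} for every i = 1, …, k−1, then D(g₁ ∘ f₁, …, g_k ∘ f_k) ≤ D(f₁, …, f_k). -/

import Mathlib

/-- The (higher) homotopic distance of a family of continuous maps `f i : X → Y`:
the least `l` such that `X` admits an open cover by `l` open sets on each of which
all the maps restrict to pairwise homotopic maps (`∞` if no such cover exists). -/
noncomputable def homDist {X Y : Type*} [TopologicalSpace X] [TopologicalSpace Y]
    {k : ℕ} (f : Fin k → C(X, Y)) : ℕ∞ :=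
  sInf ((fun n : ℕ => (n : ℕ∞)) '' {n : ℕ | ∃ U : Fin n → Set X,
    (∀ j, IsOpen (U j)) ∧ (⋃ j, U j) = Set.univ ∧
    ∀ j i i', ((f i).restrict (U j)).Homotopic ((f i').restrict (U j))})

/-- Homotopic distance of two maps. -/
noncomputable def homDist2 {X Y : Type*} [TopologicalSpace X] [TopologicalSpace Y]
    (f g : C(X, Y)) : ℕ∞ :=
  homDist ![f, g]

lemma chain_homotopic {X' Y : Type*} [TopologicalSpace X'] [TopologicalSpace Y]
    {k : ℕ} (g : Fin k → C(X', Y))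
    (hg : ∀ i : Fin k, ∀ hi : i.val + 1 < k, (g i).Homotopic (g ⟨i.val + 1, hi⟩))
    (i i' : Fin k) : (g i).Homotopic (g i') := by
  have aux : ∀ b a : ℕ, ∀ _hab : a ≤ b, ∀ hb : b < k,
      (g ⟨a, lt_of_le_of_lt _hab hb⟩).Homotopic (g ⟨b, hb⟩) := by
    intro b
    induction b with
    | zero => intro a ha hb; interval_cases a; exact ContinuousMap.Homotopic.refl _
    | succ n ih =>
      intro a ha hb
      rcases Nat.lt_or_ge a (n+1) with h | h
      · have hn : n < k := by omega
        exact (ih a (by omega) hn).trans (hg ⟨n, hn⟩ hb)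
      · have : a = n + 1 := by omega
        subst this; exact ContinuousMap.Homotopic.refl _
  rcases le_or_gt i.val i'.val with h | h
  · have := aux i'.val i.val h i'.isLt; simpa using this
  · have := aux i.val i'.val h.le i.isLt; exact (by simpa using this : (g i').Homotopic (g i)).symm

theorem homDist_comp_le_of_homotopic_chain {X X' Y : Type*} [TopologicalSpace X]
    [TopologicalSpace X'] [TopologicalSpace Y] {k : ℕ} (f : Fin k → C(X, X'))
    (g : Fin k → C(X', Y))
    (hg : ∀ i : Fin k, ∀ hi : i.val + 1 < k, (g i).Homotopic (g ⟨i.val + 1, hi⟩)) :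
    homDist (fun i => (g i).comp (f i)) ≤ homDist f := by
  apply sInf_le_sInf
  apply Set.image_mono
  rintro n ⟨U, hopen, hcov, hhom⟩
  refine ⟨U, hopen, hcov, fun j i i' => ?_⟩
  have h1 : ((g i).comp (f i)).restrict (U j) = (g i).comp ((f i).restrict (U j)) := rfl
  have h2 : ((g i').comp (f i')).restrict (U j) = (g i').comp ((f i').restrict (U j)) := rfl
  rw [h1, h2]
  exact (chain_homotopic g hg i i').comp (hhom j i i')
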